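/- Let a < b be real numbers, let g : [a, b] → ℝ be concave, let m ∈ ℕ with ℓ := ⌊m/2⌋, and let x_1, …, x_m ∈ [a, b] satisfy Σ_{i=1}^m x_i = m·(a+b)/2. Then Σ_{i=1}^m g(x_i) ≥ ℓ·g(a) + ℓ·g(b) + (m − 2ℓ)·g((a+b)/2); i.e., among all such m-tuples the sum Σ g(x_i) is minimized by taking ℓ copies of a, ℓ copies of b, and (if m is odd) one copy of (a+b)/2. -/

import Mathlib

open Finset

/-- Chord lemma: a concave function lies above its chords. -/
lemma chord_le {g : ℝ → ℝ} {s : Set ℝ} (hg : ConcaveOn ℝ s g) {p q x : ℝ}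
    (hp : p ∈ s) (hq : q ∈ s) (hpq : p < q) (hx1 : p ≤ x) (hx2 : x ≤ q) :
    ((q - x) * g p + (x - p) * g q) / (q - p) ≤ g x := by
  have h0 : (0:ℝ) < q - p := by linarith
  have ht1 : 0 ≤ (q - x) / (q - p) := div_nonneg (by linarith) h0.le
  have ht2 : 0 ≤ (x - p) / (q - p) := div_nonneg (by linarith) h0.le
  have hts : (q - x) / (q - p) + (x - p) / (q - p) = 1 := by
    rw [← add_div]
    field_simp
    ring
  have h := hg.2 hp hq ht1 ht2 hts
  simp only [smul_eq_mul] at h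
  have hxx : (q - x) / (q - p) * p + (x - p) / (q - p) * q = x := by
    field_simp
    ring
  rw [hxx] at h
  calc ((q - x) * g p + (x - p) * g q) / (q - p)
      = (q - x) / (q - p) * g p + (x - p) / (q - p) * g q := by ring
    _ ≤ g x := h

theorem stmt_18 (a b : ℝ) (hab : a < b) (g : ℝ → ℝ)
    (hg : ConcaveOn ℝ (Set.Icc a b) g) (m : ℕ) (x : Fin m → ℝ)
    (hx : ∀ i, x i ∈ Set.Icc a b) (hsum : ∑ i, x i = m * (a + b) / 2) :
    ((m / 2 : ℕ) : ℝ) * g a + ((m / 2 : ℕ) : ℝ) * g b +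
        ((m : ℝ) - 2 * ((m / 2 : ℕ) : ℝ)) * g ((a + b) / 2) ≤
      ∑ i, g (x i) := by
  set c : ℝ := (a + b) / 2 with hc
  have hd : (0:ℝ) < (b - a) / 2 := by linarith
  have hca : c - a = (b - a) / 2 := by rw [hc]; ring
  have hbc : b - c = (b - a) / 2 := by rw [hc]; ring
  have hac : a < c := by linarith
  have hcb : c < b := by linarith
  have hcmem : c ∈ Set.Icc a b := ⟨hac.le, hcb.le⟩
  have hamem : a ∈ Set.Icc a b := ⟨le_rfl, hab.le⟩
  have hbmem : b ∈ Set.Icc a b := ⟨hab.le, le_rfl⟩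
  set s1 : ℝ := (g c - g a) / (c - a) with hs1def
  set s2 : ℝ := (g b - g c) / (b - c) with hs2def
  have hs1 : s1 * ((b - a) / 2) = g c - g a := by
    rw [hs1def, ← hca]
    exact div_mul_cancel₀ _ (by linarith : c - a ≠ 0)
  have hs2 : s2 * ((b - a) / 2) = g b - g c := by
    rw [hs2def, ← hbc]
    exact div_mul_cancel₀ _ (by linarith : b - c ≠ 0)
  -- midpoint concavity gives s2 ≤ s1
  have hmid : (1/2 : ℝ) * g a + (1/2 : ℝ) * g b ≤ g c := by
    have h := hg.2 hamem hbmem (by norm_num : (0:ℝ) ≤ 1/2) (by norm_num : (0:ℝ) ≤ 1/2)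
      (by norm_num)
    have : (1/2 : ℝ) • a + (1/2 : ℝ) • b = c := by rw [hc]; simp [smul_eq_mul]; ring
    rw [this] at h
    simpa [smul_eq_mul] using h
  have hs21 : s2 - s1 ≤ 0 := by
    have : (s2 - s1) * ((b - a) / 2) ≤ 0 := by
      rw [sub_mul, hs1, hs2]; linarith
    nlinarith
  -- pointwise bound
  have key : ∀ i, g c + s1 * min (x i - c) 0 + s2 * max (x i - c) 0 ≤ g (x i) := by
    intro i
    obtain ⟨hxa, hxb⟩ := hx i
    rcases le_total (x i) c with h | h
    · have hch := chord_le hg hamem hcmem hac hxa h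
      have hmin : min (x i - c) 0 = x i - c := min_eq_left (by linarith)
      have hmax : max (x i - c) 0 = 0 := max_eq_right (by linarith)
      rw [hmin, hmax, mul_zero, add_zero]
      have : g c + s1 * (x i - c) = ((c - x i) * g a + (x i - a) * g c) / (c - a) := by
        rw [hs1def]
        have h0 : c - a ≠ 0 := by linarith
        field_simp
        ring
      linarith [this ▸ hch]
    · have hch := chord_le hg hcmem hbmem hcb h hxb
      have hmin : min (x i - c) 0 = 0 := min_eq_right (by linarith)
      have hmax : max (x i - c) 0 = x i - c := max_eq_left (by linarith)
      rw [hmin, hmax, mul_zero, add_zero]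
      have : g c + s2 * (x i - c) = ((b - x i) * g c + (x i - c) * g b) / (b - c) := by
        rw [hs2def]
        have h0 : b - c ≠ 0 := by linarith
        field_simp
        ring
      linarith [this ▸ hch]
  -- sum the pointwise bound
  set P : ℝ := ∑ i, max (x i - c) 0 with hP
  set N : ℝ := ∑ i, min (x i - c) 0 with hN
  have hsum_bound : (m : ℝ) * g c + s1 * N + s2 * P ≤ ∑ i, g (x i) := by
    calc (m : ℝ) * g c + s1 * N + s2 * P
        = ∑ i, (g c + s1 * min (x i - c) 0 + s2 * max (x i - c) 0) := by
          rw [hN, hP]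
          simp [Finset.sum_add_distrib, Finset.mul_sum, Finset.sum_const, card_univ]
      _ ≤ ∑ i, g (x i) := Finset.sum_le_sum (fun i _ => key i)
  -- P + N = 0
  have hPN : P + N = 0 := by
    have : P + N = ∑ i, (x i - c) := by
      rw [hP, hN, ← Finset.sum_add_distrib]
      apply Finset.sum_congr rfl
      intro i _
      simp [max_add_min]
    rw [this, Finset.sum_sub_distrib, hsum, Finset.sum_const, card_univ,
      Fintype.card_fin, nsmul_eq_mul, hc]
    ring
  -- bound on P
  set S : Finset (Fin m) := Finset.univ.filter (fun i => c < x i) with hS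
  have hPbound : P ≤ (S.card : ℝ) * ((b - a) / 2) := by
    rw [hP]
    calc ∑ i, max (x i - c) 0
        = ∑ i ∈ S, max (x i - c) 0 + ∑ i ∈ Sᶜ, max (x i - c) 0 := by
          rw [Finset.sum_add_sum_compl]
      _ = ∑ i ∈ S, max (x i - c) 0 := by
          have : ∑ i ∈ Sᶜ, max (x i - c) 0 = 0 := by
            apply Finset.sum_eq_zero
            intro i hi
            simp [hS, Finset.mem_compl, Finset.mem_filter] at hi
            exact max_eq_right (by linarith)
          rw [this, add_zero]
      _ ≤ ∑ i ∈ S, ((b - a) / 2) := by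
          apply Finset.sum_le_sum
          intro i _
          have := (hx i).2
          refine max_le (by rw [hbc] at *; linarith) (by linarith)
      _ = (S.card : ℝ) * ((b - a) / 2) := by rw [Finset.sum_const]; simp [mul_comm]
  have hNbound : -N ≤ ((Sᶜ : Finset (Fin m)).card : ℝ) * ((b - a) / 2) := by
    rw [hN]
    calc -(∑ i, min (x i - c) 0) = ∑ i, (- min (x i - c) 0) := by rw [Finset.sum_neg_distrib]
      _ = ∑ i ∈ S, (- min (x i - c) 0) + ∑ i ∈ Sᶜ, (- min (x i - c) 0) := by
          rw [Finset.sum_add_sum_compl]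
      _ = ∑ i ∈ Sᶜ, (- min (x i - c) 0) := by
          have : ∑ i ∈ S, (- min (x i - c) 0) = 0 := by
            apply Finset.sum_eq_zero
            intro i hi
            simp [hS, Finset.mem_filter] at hi
            rw [min_eq_right (by linarith)]; ring
          rw [this, zero_add]
      _ ≤ ∑ i ∈ Sᶜ, ((b - a) / 2) := by
          apply Finset.sum_le_sum
          intro i hi
          simp [hS, Finset.mem_compl, Finset.mem_filter] at hi
          have := (hx i).1
          have hmin : min (x i - c) 0 = x i - c := min_eq_left (by linarith)
          rw [hmin]; rw [hca] at *; linarith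
      _ = ((Sᶜ : Finset (Fin m)).card : ℝ) * ((b - a) / 2) := by
          rw [Finset.sum_const]; simp [mul_comm]
  -- P ≤ ℓ (b-a)/2
  have hcards : S.card + (Sᶜ : Finset (Fin m)).card = m := by
    rw [Finset.card_add_card_compl]; simp
  have hminle : min S.card (Sᶜ : Finset (Fin m)).card ≤ m / 2 := by
    apply Nat.le_div_iff_mul_le (by norm_num) |>.mpr
    have := min_le_left S.card (Sᶜ : Finset (Fin m)).card
    have := min_le_right S.card (Sᶜ : Finset (Fin m)).card
    omega
  have hPle : P ≤ ((m / 2 : ℕ) : ℝ) * ((b - a) / 2) := by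
    have hPN' : P = -N := by linarith
    rcases le_total S.card (Sᶜ : Finset (Fin m)).card with h | h
    · have : (S.card : ℝ) ≤ ((m / 2 : ℕ) : ℝ) := by
        have := hminle; rw [min_eq_left h] at this; exact_mod_cast this
      calc P ≤ (S.card : ℝ) * ((b - a) / 2) := hPbound
        _ ≤ ((m / 2 : ℕ) : ℝ) * ((b - a) / 2) := by
            apply mul_le_mul_of_nonneg_right this hd.le
    · have : ((Sᶜ : Finset (Fin m)).card : ℝ) ≤ ((m / 2 : ℕ) : ℝ) := by
        have := hminle; rw [min_eq_right h] at this; exact_mod_cast this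
      calc P = -N := hPN'
        _ ≤ ((Sᶜ : Finset (Fin m)).card : ℝ) * ((b - a) / 2) := hNbound
        _ ≤ ((m / 2 : ℕ) : ℝ) * ((b - a) / 2) := by
            apply mul_le_mul_of_nonneg_right this hd.le
  -- conclude
  have hfinal : (m : ℝ) * g c + s1 * N + s2 * P
      = (m : ℝ) * g c + (s2 - s1) * P := by
    have : N = -P := by linarith
    rw [this]; ring
  have hstep : (s2 - s1) * (((m / 2 : ℕ) : ℝ) * ((b - a) / 2)) ≤ (s2 - s1) * P :=
    mul_le_mul_of_nonpos_left hPle hs21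
  have hRHS : ((m / 2 : ℕ) : ℝ) * g a + ((m / 2 : ℕ) : ℝ) * g b +
      ((m : ℝ) - 2 * ((m / 2 : ℕ) : ℝ)) * g c
      = (m : ℝ) * g c + (s2 - s1) * (((m / 2 : ℕ) : ℝ) * ((b - a) / 2)) := by
    have h1 : (s2 - s1) * ((b - a) / 2) = g b + g a - 2 * g c := by
      rw [sub_mul, hs1, hs2]; ring
    have h2 : (s2 - s1) * (((m / 2 : ℕ) : ℝ) * ((b - a) / 2))
        = ((m / 2 : ℕ) : ℝ) * (g b + g a - 2 * g c) := by
      rw [← h1]; ring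
    rw [h2]; ring
  clear_value c s1 s2 P N S
  linarith [hRHS, hstep, hfinal, hsum_bound]
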